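/- Let A be a finite alphabet with δ_A > 1/2 and A_max = max A. With F(x) = #{D ∈ V_{A²} : ⟨D⟩ ≤ x}, for every real x ≥ 4·A_max² one has F(x) − F(x/2) ≤ 4·x^{2δ_A}. -/

import Mathlib

/-- The continuant of a finite word of positive integers. -/
def cont : List ℕ → ℕ
  | [] => 1
  | [a] => a
  | a :: b :: l => a * cont (b :: l) + cont l

/-- `F(x)` = number of nonempty words of even length over `A` whose continuant is `≤ x`. -/
noncomputable def FA (A : Finset ℕ) (x : ℝ) : ℕ :=
  Set.ncard {D : List ℕ | D ≠ [] ∧ (∀ d ∈ D, d ∈ A) ∧ Even D.length ∧ (cont D : ℝ) ≤ x}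

/-- If `δ_A > 1/2` and `ζ(s,A²) = ∑_{D ∈ V_{A²}} ⟨D⟩^{-s}` converges for every `s > 2δ_A`,
then `F(x) − F(x/2) ≤ 4 x^{2δ_A}` for every `x ≥ 4·A_max²`. -/
lemma cont_nil : cont [] = 1 := rfl
lemma cont_single (a : ℕ) : cont [a] = a := rfl
lemma cont_cons_cons (a b : ℕ) (l : List ℕ) :
    cont (a :: b :: l) = a * cont (b :: l) + cont l := rfl

lemma one_le_cont : ∀ l : List ℕ, (∀ d ∈ l, 1 ≤ d) → 1 ≤ cont l := by
  intro l
  induction l using cont.induct with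
  | case1 => intro _; simp [cont]
  | case2 a => intro h; simpa [cont] using h a (by simp)
  | case3 a b l ih1 ih2 =>
      intro h
      have h1 : 1 ≤ cont (b :: l) := ih1 (fun d hd => h d (by simp at hd ⊢; tauto))
      have ha : 1 ≤ a := h a (by simp)
      calc 1 ≤ a * cont (b :: l) := Nat.one_le_iff_ne_zero.mpr (by positivity)
      _ ≤ _ := by simp [cont_cons_cons]

lemma two_le_cont (a b : ℕ) (l : List ℕ) (h : ∀ d ∈ a :: b :: l, 1 ≤ d) :
    2 ≤ cont (a :: b :: l) := by
  have h1 : 1 ≤ cont (b :: l) := one_le_cont _ (fun d hd => h d (by simp at hd ⊢; tauto))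
  have h2 : 1 ≤ cont l := one_le_cont _ (fun d hd => h d (by simp at hd ⊢; tauto))
  have ha : 1 ≤ a := h a (by simp)
  have : 1 ≤ a * cont (b :: l) := Nat.one_le_iff_ne_zero.mpr (by positivity)
  rw [cont_cons_cons]; omega

lemma cont_tail_le (l : List ℕ) (h : ∀ d ∈ l, 1 ≤ d) : cont l.tail ≤ cont l := by
  match l with
  | [] => simp
  | [a] => simpa [cont] using h a (by simp)
  | a :: b :: m =>
      rw [cont_cons_cons]
      have ha : 1 ≤ a := h a (by simp)
      have : cont (b :: m) ≤ a * cont (b :: m) := Nat.le_mul_of_pos_left _ ha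
      simp only [List.tail_cons]; omega

lemma cont_dropLast_le : ∀ l : List ℕ, (∀ d ∈ l, 1 ≤ d) → cont l.dropLast ≤ cont l := by
  intro l
  induction l using cont.induct with
  | case1 => simp
  | case2 a => intro h; simpa [cont] using h a (by simp)
  | case3 a b l ih1 ih2 =>
      intro h
      have h1 := ih1 (fun d hd => h d (by simp at hd ⊢; tauto))
      have h2 := ih2 (fun d hd => h d (by simp at hd ⊢; tauto))
      match l with
      | [] =>
          have ha : 1 ≤ a := h a (by simp)
          have hb : 1 ≤ b := h b (by simp)
          show cont [a] ≤ cont [a, b]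
          rw [cont_single, cont_cons_cons, cont_single, cont_nil]
          nlinarith
      | c :: l' =>
          have hd2 : (b :: c :: l').dropLast = b :: (c :: l').dropLast := by simp
          have hd : (a :: b :: c :: l').dropLast = a :: b :: (c :: l').dropLast := by simp
          rw [hd2] at h1
          rw [hd]
          rcases hdl : (c :: l').dropLast with _ | ⟨e, m⟩ <;> rw [hdl] at h1 h2
          · rw [cont_single] at h1
            have h3 : 1 ≤ cont (c :: l') :=
              one_le_cont _ (fun d hdm => h d (by simp at hdm ⊢; tauto))
            show cont [a, b] ≤ _
            rw [cont_cons_cons, cont_single, cont_nil, cont_cons_cons]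
            have := Nat.mul_le_mul_left a h1
            omega
          · rw [cont_cons_cons a b (e :: m), cont_cons_cons a b (c :: l')]
            have := Nat.mul_le_mul_left a h1
            omega

lemma cont_append : ∀ l m : List ℕ, l ≠ [] → m ≠ [] →
    cont (l ++ m) = cont l * cont m + cont l.dropLast * cont m.tail := by
  intro l
  induction l using cont.induct with
  | case1 => intro m h; exact absurd rfl h
  | case2 a =>
      intro m _ hm
      match m with
      | b :: m' =>
          show cont (a :: b :: m') = _
          rw [cont_cons_cons, cont_single]
          simp [cont_nil]
  | case3 a b l ih1 ih2 =>
      intro m _ hm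
      match l with
      | [] =>
          match m with
          | c :: m' =>
              show cont (a :: b :: c :: m') = _
              rw [cont_cons_cons, cont_cons_cons b c m']
              show _ = cont [a, b] * _ + cont [a] * cont (c :: m').tail
              rw [cont_cons_cons, cont_single, cont_nil, cont_single]
              simp only [List.tail_cons]
              ring
      | c :: l' =>
          have h1 := ih1 m (by simp) hm
          have h2 := ih2 m (by simp) hm
          have e1 : (a :: b :: c :: l') ++ m = a :: b :: ((c :: l') ++ m) := by simp
          have e2 : (b :: c :: l') ++ m = b :: ((c :: l') ++ m) := by simp
          rw [e1, cont_cons_cons]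
          rw [e2] at h1
          rw [h1, h2]
          have e3 : (a :: b :: c :: l').dropLast = a :: (b :: c :: l').dropLast := by simp
          have e4 : (b :: c :: l').dropLast = b :: (c :: l').dropLast := by simp
          rw [e3, e4, cont_cons_cons a b ((c :: l').dropLast), cont_cons_cons a b (c :: l')]
          ring

lemma cont_append_le (l m : List ℕ) (hl : l ≠ []) (hm : m ≠ [])
    (hl1 : ∀ d ∈ l, 1 ≤ d) (hm1 : ∀ d ∈ m, 1 ≤ d) :
    cont (l ++ m) ≤ 2 * (cont l * cont m) := by
  rw [cont_append l m hl hm]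
  have h1 := cont_dropLast_le l hl1
  have h2 : cont m.tail ≤ cont m := cont_tail_le m hm1
  nlinarith

lemma cont_le_cont_append (l m : List ℕ) (hl : l ≠ []) (hm1 : ∀ d ∈ m, 1 ≤ d) :
    cont l ≤ cont (l ++ m) := by
  rcases eq_or_ne m [] with rfl | hm
  · simp
  · rw [cont_append l m hl hm]
    have h1 : 1 ≤ cont m := one_le_cont m hm1
    nlinarith [Nat.zero_le (cont l.dropLast * cont m.tail), Nat.le_mul_of_pos_right (cont l) h1]

lemma two_cont_le_append (l m : List ℕ) (hl : l ≠ []) (hm2 : 2 ≤ m.length)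
    (hm1 : ∀ d ∈ m, 1 ≤ d) : 2 * cont l ≤ cont (l ++ m) := by
  match m, hm2 with
  | a :: b :: m', _ =>
      rw [cont_append l _ hl (by simp)]
      have h2 : 2 ≤ cont (a :: b :: m') := two_le_cont a b m' hm1
      nlinarith [Nat.zero_le (cont l.dropLast * cont (a :: b :: m').tail)]

lemma div_unique' {p d d' r r' : ℕ} (h : d * p + r = d' * p + r')
    (h1 : 1 ≤ r) (h2 : r ≤ p) (h1' : 1 ≤ r') (h2' : r' ≤ p) : d = d' ∧ r = r' := by
  have hd : d = d' := by
    by_contra hne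
    rcases Nat.lt_or_ge d d' with hlt | hge
    · have hmul : (d + 1) * p ≤ d' * p := Nat.mul_le_mul_right p (Nat.succ_le_of_lt hlt)
      have h3 : d * p + p ≤ d' * p := by nlinarith
      linarith
    · have hlt : d' < d := by omega
      have hmul : (d' + 1) * p ≤ d * p := Nat.mul_le_mul_right p (Nat.succ_le_of_lt hlt)
      have h3 : d' * p + p ≤ d * p := by nlinarith
      linarith
  subst hd
  omega

lemma cont_two_le_of_len (l : List ℕ) (hl : 2 ≤ l.length) (h1 : ∀ d ∈ l, 1 ≤ d) :
    2 ≤ cont l := by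
  match l, hl with
  | a :: b :: m, _ => exact two_le_cont a b m h1

lemma cont_pair_inj : ∀ (n : ℕ) (l l' : List ℕ), l.length ≤ n →
    (∀ d ∈ l, 1 ≤ d) → (∀ d ∈ l', 1 ≤ d) → l.length % 2 = l'.length % 2 →
    cont l = cont l' → cont l.tail = cont l'.tail → l = l' := by
  intro n
  induction n with
  | zero =>
      intro l l' hn h1 h1' hpar hc _
      interval_cases hl : l.length
      rw [List.length_eq_zero_iff] at hl
      subst hl
      match l', hpar with
      | [], _ => rfl
      | (a :: b :: m), hpar =>
          exfalso
          have := cont_two_le_of_len (a :: b :: m) (by simp) h1'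
          rw [← hc, cont_nil] at this; omega
  | succ n ih =>
      intro l l' hn h1 h1' hpar hc hct
      match l with
      | [] =>
          match l', hpar with
          | [], _ => rfl
          | (a :: b :: m), hpar =>
              exfalso
              have := cont_two_le_of_len (a :: b :: m) (by simp) h1'
              rw [← hc, cont_nil] at this; omega
      | [d] =>
          match l', hpar with
          | (d' :: ls'), hpar =>
              match ls', hpar with
              | [], _ => rw [cont_single, cont_single] at hc; rw [hc]
              | (b :: m), hpar =>
                  exfalso
                  have hm : m ≠ [] := by
                    intro h; subst h; simp at hpar
                  have : 2 ≤ cont (b :: m) := by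
                    apply cont_two_le_of_len _ _ (fun d hd => h1' d (by simp at hd ⊢; tauto))
                    match m, hm with
                    | c :: m', _ => simp
                  simp only [List.tail_cons] at hct
                  rw [← hct] at this
                  simp [cont_nil] at this
      | (d :: b :: m) =>
          match l', hpar with
          | [], hpar =>
              exfalso
              have := cont_two_le_of_len (d :: b :: m) (by simp) h1
              rw [hc, cont_nil] at this; omega
          | [d'], hpar =>
              exfalso
              have hm : m ≠ [] := by intro h; subst h; simp at hpar
              have : 2 ≤ cont (b :: m) := by
                apply cont_two_le_of_len _ _ (fun d hd => h1 d (by simp at hd ⊢; tauto))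
                match m, hm with
                | c :: m', _ => simp
              simp only [List.tail_cons] at hct
              rw [hct] at this
              simp [cont_nil] at this
          | (d' :: b' :: m'), hpar =>
              have hb1 : ∀ x ∈ b :: m, 1 ≤ x := fun x hx => h1 x (by simp at hx ⊢; tauto)
              have hb1' : ∀ x ∈ b' :: m', 1 ≤ x := fun x hx => h1' x (by simp at hx ⊢; tauto)
              simp only [List.tail_cons] at hct
              rw [cont_cons_cons, cont_cons_cons] at hc
              have hr1 : 1 ≤ cont m := one_le_cont m (fun x hx => h1 x (by simp at hx ⊢; tauto))
              have hr1' : 1 ≤ cont m' := one_le_cont m' (fun x hx => h1' x (by simp at hx ⊢; tauto))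
              have hr2 : cont m ≤ cont (b :: m) := by
                have := cont_tail_le (b :: m) hb1; simpa using this
              have hr2' : cont m' ≤ cont (b' :: m') := by
                have := cont_tail_le (b' :: m') hb1'; simpa using this
              rw [← hct] at hc hr2'
              obtain ⟨hdd, hrr⟩ := div_unique' hc hr1 hr2 hr1' hr2'
              have htails : b :: m = b' :: m' := by
                apply ih (b :: m) (b' :: m') (by simp at hn ⊢; omega) hb1 hb1'
                · simp at hpar ⊢; omega
                · exact hct
                · simpa using hrr
              rw [hdd, htails]

lemma join_ne_nil' (L : List (List ℕ)) (hL : L ≠ []) (h : ∀ W ∈ L, W ≠ []) :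
    L.flatten ≠ [] := by
  match L, hL with
  | W :: R, _ =>
      simp only [List.flatten_cons]
      intro hc
      rcases List.append_eq_nil_iff.mp hc with ⟨h1, _⟩
      exact h W (by simp) h1

lemma even_join_length (L : List (List ℕ)) (h : ∀ W ∈ L, Even W.length) :
    Even L.flatten.length := by
  induction L with
  | nil => simp
  | cons W R ih =>
      simp only [List.flatten_cons, List.length_append]
      exact (h W (by simp)).add (ih (fun W' hW' => h W' (by simp [hW'])))

lemma cont_join_le (x : ℝ) : ∀ L : List (List ℕ), L ≠ [] →
    (∀ W ∈ L, W ≠ [] ∧ (∀ d ∈ W, 1 ≤ d) ∧ (cont W : ℝ) ≤ x) →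
    (cont L.flatten : ℝ) ≤ 2 ^ (L.length - 1) * x ^ L.length := by
  intro L
  induction L with
  | nil => intro h; exact absurd rfl h
  | cons W R ih =>
      intro _ h
      rcases eq_or_ne R [] with rfl | hR
      · simpa using (h W (by simp)).2.2
      · have hW := h W (by simp)
        have hR1 : ∀ W' ∈ R, W' ≠ [] ∧ (∀ d ∈ W', 1 ≤ d) ∧ (cont W' : ℝ) ≤ x :=
          fun W' hW' => h W' (by simp [hW'])
        have hjoin := ih hR hR1
        have hjne : R.flatten ≠ [] := join_ne_nil' R hR (fun W' h' => (hR1 W' h').1)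
        have hape : cont (W ++ R.flatten) ≤ 2 * (cont W * cont R.flatten) :=
          cont_append_le W R.flatten hW.1 hjne hW.2.1
            (fun d hd => by
              rcases List.mem_flatten.mp hd with ⟨W', hW', hdW'⟩
              exact (hR1 W' hW').2.1 d hdW')
        have hx0 : (0 : ℝ) ≤ x := le_trans (by exact_mod_cast Nat.zero_le _) hW.2.2
        have hcW : (0:ℝ) ≤ (cont W : ℝ) := by positivity
        have hcast : (cont (W :: R).flatten : ℝ) ≤ 2 * ((cont W : ℝ) * (cont R.flatten : ℝ)) := by
          simp only [List.flatten_cons]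
          exact_mod_cast hape
        calc (cont (W :: R).flatten : ℝ) ≤ 2 * ((cont W : ℝ) * (cont R.flatten : ℝ)) := hcast
          _ ≤ 2 * (x * (2 ^ (R.length - 1) * x ^ R.length)) := by
              apply mul_le_mul_of_nonneg_left _ (by norm_num)
              apply mul_le_mul hW.2.2 hjoin (by positivity) hx0
          _ = 2 ^ (R.length - 1 + 1) * x ^ (R.length + 1) := by ring
          _ = 2 ^ ((W :: R).length - 1) * x ^ (W :: R).length := by
              have : R.length - 1 + 1 = R.length := Nat.succ_pred_eq_of_pos
                (List.length_pos_iff.mpr hR)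
              rw [this]
              simp [pow_succ]

def Pw (x : ℝ) (W : List ℕ) : Prop :=
  W ≠ [] ∧ (∀ d ∈ W, 1 ≤ d) ∧ Even W.length ∧ x / 2 < (cont W : ℝ) ∧ (cont W : ℝ) ≤ x

lemma head_eq_aux (x : ℝ) (W W' u u' : List ℕ) (h : W ++ u = W' ++ u')
    (hW : Pw x W) (hW' : Pw x W') (hlen : W.length ≤ W'.length) : W = W' := by
  have hp1 : W <+: W' ++ u' := h ▸ List.prefix_append W u
  have hp2 : W' <+: W' ++ u' := List.prefix_append W' u'
  have hpre : W <+: W' := List.prefix_of_prefix_length_le hp1 hp2 hlen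
  obtain ⟨t, rfl⟩ := hpre
  rcases eq_or_ne t [] with rfl | ht
  · simp
  · exfalso
    have htlen : Even t.length := by
      have h1 := hW'.2.2.1
      rw [List.length_append] at h1
      exact (Nat.even_add.mp h1).mp hW.2.2.1
    have ht2 : 2 ≤ t.length := by
      rcases htlen with ⟨k, hk⟩
      have : t.length ≠ 0 := fun hc => ht (List.length_eq_zero_iff.mp hc)
      omega
    have hdouble : 2 * cont W ≤ cont (W ++ t) :=
      two_cont_le_append W t hW.1 ht2
        (fun d hd => hW'.2.1 d (by simp [hd]))
    have hreal : (2 : ℝ) * (cont W : ℝ) ≤ (cont (W ++ t) : ℝ) := by exact_mod_cast hdouble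
    have hlow := hW.2.2.2.1
    have hup := hW'.2.2.2.2
    linarith

lemma head_eq (x : ℝ) (W W' u u' : List ℕ) (h : W ++ u = W' ++ u')
    (hW : Pw x W) (hW' : Pw x W') : W = W' := by
  rcases le_total W.length W'.length with hl | hl
  · exact head_eq_aux x W W' u u' h hW hW' hl
  · exact (head_eq_aux x W' W u' u h.symm hW' hW hl).symm

lemma join_parse (x : ℝ) : ∀ L L' : List (List ℕ),
    (∀ W ∈ L, Pw x W) → (∀ W ∈ L', Pw x W) → L.flatten = L'.flatten → L = L' := by
  intro L
  induction L with
  | nil =>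
      intro L' _ hL' hj
      match L' with
      | [] => rfl
      | W' :: R' =>
          exfalso
          have : W' ++ R'.flatten = [] := by simpa using hj.symm
          exact (hL' W' (by simp)).1 (List.append_eq_nil_iff.mp this).1
  | cons W R ih =>
      intro L' hL hL' hj
      match L' with
      | [] =>
          exfalso
          have : W ++ R.flatten = [] := by simpa using hj
          exact (hL W (by simp)).1 (List.append_eq_nil_iff.mp this).1
      | W' :: R' =>
          simp only [List.flatten_cons] at hj
          have hWW : W = W' := head_eq x W W' R.flatten R'.flatten hj
            (hL W (by simp)) (hL' W' (by simp))
          subst hWW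
          have hjr : R.flatten = R'.flatten := by
            exact List.append_cancel_left hj
          have := ih R' (fun W'' h'' => hL W'' (by simp [h'']))
            (fun W'' h'' => hL' W'' (by simp [h''])) hjr
          rw [this]

lemma T_inj (A : Finset ℕ) (hpos : ∀ a ∈ A, 1 ≤ a) (y : ℝ) :
    Set.InjOn (fun D : List ℕ => (cont D, cont D.tail))
      {D : List ℕ | D ≠ [] ∧ (∀ d ∈ D, d ∈ A) ∧ Even D.length ∧ (cont D : ℝ) ≤ y} := by
  intro l hl l' hl' hf
  simp only [Prod.mk.injEq] at hf
  refine cont_pair_inj l.length l l' le_rfl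
    (fun d hd => hpos d (hl.2.1 d hd)) (fun d hd => hpos d (hl'.2.1 d hd)) ?_ hf.1 hf.2
  rw [Nat.even_iff.mp hl.2.2.1, Nat.even_iff.mp hl'.2.2.1]

lemma T_maps (A : Finset ℕ) (hpos : ∀ a ∈ A, 1 ≤ a) (y : ℝ) :
    ∀ D ∈ {D : List ℕ | D ≠ [] ∧ (∀ d ∈ D, d ∈ A) ∧ Even D.length ∧ (cont D : ℝ) ≤ y},
      (fun D : List ℕ => (cont D, cont D.tail)) D ∈
        ((Finset.Icc 1 ⌊y⌋₊ ×ˢ Finset.Icc 1 ⌊y⌋₊ : Finset (ℕ × ℕ)) : Set (ℕ × ℕ)) := by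
  intro D hD
  obtain ⟨hne, hmem, _, hle⟩ := hD
  have h1 : ∀ d ∈ D, 1 ≤ d := fun d hd => hpos d (hmem d hd)
  have hc1 : 1 ≤ cont D := one_le_cont D h1
  have hcn : cont D ≤ ⌊y⌋₊ := Nat.le_floor (by exact_mod_cast hle)
  have ht1 : 1 ≤ cont D.tail := one_le_cont D.tail
    (fun d hd => h1 d (List.mem_of_mem_tail hd))
  have htn : cont D.tail ≤ cont D := cont_tail_le D h1
  simp only [Finset.coe_product, Set.mem_prod, Finset.mem_coe, Finset.mem_Icc]
  exact ⟨⟨hc1, hcn⟩, ⟨ht1, le_trans htn hcn⟩⟩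

lemma T_finite (A : Finset ℕ) (hpos : ∀ a ∈ A, 1 ≤ a) (y : ℝ) :
    {D : List ℕ | D ≠ [] ∧ (∀ d ∈ D, d ∈ A) ∧ Even D.length ∧ (cont D : ℝ) ≤ y}.Finite := by
  apply Set.Finite.of_finite_image _ (T_inj A hpos y)
  apply Set.Finite.subset ((Finset.Icc 1 ⌊y⌋₊ ×ˢ Finset.Icc 1 ⌊y⌋₊ : Finset (ℕ × ℕ)).finite_toSet)
  rintro p ⟨D, hD, rfl⟩
  exact T_maps A hpos y D hD

lemma T_card (A : Finset ℕ) (hpos : ∀ a ∈ A, 1 ≤ a) (y : ℝ) :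
    ({D : List ℕ | D ≠ [] ∧ (∀ d ∈ D, d ∈ A) ∧ Even D.length ∧ (cont D : ℝ) ≤ y}).ncard
      ≤ ⌊y⌋₊ * ⌊y⌋₊ := by
  have h := Set.ncard_le_ncard_of_injOn _ (T_maps A hpos y) (T_inj A hpos y)
    ((Finset.Icc 1 ⌊y⌋₊ ×ˢ Finset.Icc 1 ⌊y⌋₊ : Finset (ℕ × ℕ)).finite_toSet)
  rw [Set.ncard_coe_finset] at h
  simpa [Finset.card_product, Nat.card_Icc] using h

lemma rpow_neg_anti {a b s : ℝ} (ha : 0 < a) (hab : a ≤ b) (hs : 0 ≤ s) :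
    b ^ (-s) ≤ a ^ (-s) := by
  rw [Real.rpow_neg ha.le, Real.rpow_neg (le_trans ha.le hab)]
  exact inv_anti₀ (Real.rpow_pos_of_pos ha s) (Real.rpow_le_rpow ha.le hab hs)

lemma key_estimate (A : Finset ℕ) (hpos : ∀ a ∈ A, 1 ≤ a) (x s : ℝ)
    (hx0 : 0 < x) (hs0 : 0 ≤ s)
    (S : Set (List ℕ)) (hSfin : S.Finite)
    (hSsub : ∀ W ∈ S, ((W ≠ [] ∧ (∀ d ∈ W, d ∈ A) ∧ Even W.length) ∧ Pw x W))
    (hcard : ((2 * x) ^ s : ℝ) = (S.ncard : ℝ))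
    (hsum : Summable (fun D : {l : List ℕ // l ≠ [] ∧ (∀ d ∈ l, d ∈ A) ∧ Even l.length} =>
        ((cont D.1 : ℝ)) ^ (-s))) : False := by
  classical
  set I := {l : List ℕ // l ≠ [] ∧ (∀ d ∈ l, d ∈ A) ∧ Even l.length} with hI
  set f : I → ℝ := fun D => ((cont D.1 : ℝ)) ^ (-s) with hf
  set sfin : Finset (List ℕ) := hSfin.toFinset with hsfin
  have hmemS : ∀ W : {W : List ℕ // W ∈ sfin}, (W : List ℕ) ∈ S := by
    intro W; exact (Set.Finite.mem_toFinset hSfin).mp W.2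
  have h2x0 : (0 : ℝ) < 2 * x := by linarith
  -- list of words from a vector
  have hofFn_mem : ∀ (k : ℕ) (v : Fin (k + 1) → {W : List ℕ // W ∈ sfin}),
      ∀ W ∈ List.ofFn (fun i => (v i : List ℕ)), W ∈ S := by
    intro k v W hW
    rw [List.mem_ofFn] at hW
    obtain ⟨i, rfl⟩ := hW
    exact hmemS (v i)
  -- the join map lands in I
  have hjoin_mem : ∀ (k : ℕ) (v : Fin (k + 1) → {W : List ℕ // W ∈ sfin}),
      ((List.ofFn (fun i => (v i : List ℕ))).flatten ≠ [] ∧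
        (∀ d ∈ (List.ofFn (fun i => (v i : List ℕ))).flatten, d ∈ A) ∧
        Even (List.ofFn (fun i => (v i : List ℕ))).flatten.length) := by
    intro k v
    have hne : List.ofFn (fun i => (v i : List ℕ)) ≠ [] := by
      intro hc
      have := congrArg List.length hc
      simp at this
    refine ⟨join_ne_nil' _ hne (fun W hW => ((hSsub W (hofFn_mem k v W hW)).1).1), ?_, ?_⟩
    · intro d hd
      rcases List.mem_flatten.mp hd with ⟨W, hW, hdW⟩
      exact ((hSsub W (hofFn_mem k v W hW)).1).2.1 d hdW
    · exact even_join_length _ (fun W hW => ((hSsub W (hofFn_mem k v W hW)).1).2.2)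
  let φ : ∀ k : ℕ, (Fin (k + 1) → {W : List ℕ // W ∈ sfin}) → I :=
    fun k v => ⟨(List.ofFn (fun i => (v i : List ℕ))).flatten, hjoin_mem k v⟩
  -- parsing
  have hparse : ∀ (k k' : ℕ) (v : Fin (k + 1) → {W : List ℕ // W ∈ sfin})
      (v' : Fin (k' + 1) → {W : List ℕ // W ∈ sfin}),
      (List.ofFn (fun i => (v i : List ℕ))).flatten = (List.ofFn (fun i => (v' i : List ℕ))).flatten →
      (List.ofFn (fun i => (v i : List ℕ))) = (List.ofFn (fun i => (v' i : List ℕ))) := by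
    intro k k' v v' h
    exact join_parse x _ _ (fun W hW => (hSsub W (hofFn_mem k v W hW)).2)
      (fun W hW => (hSsub W (hofFn_mem k' v' W hW)).2) h
  have hinj : ∀ k : ℕ, Function.Injective (φ k) := by
    intro k v v' h
    have h1 : (List.ofFn (fun i => (v i : List ℕ))) = (List.ofFn (fun i => (v' i : List ℕ))) :=
      hparse k k v v' (congrArg Subtype.val h)
    funext i
    exact Subtype.ext (congrFun (List.ofFn_inj.mp h1) i)
  let B : ℕ → Finset I := fun k => Finset.image (φ k) Finset.univ
  have hBcard : ∀ k, (B k).card = sfin.card ^ (k + 1) := by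
    intro k
    rw [Finset.card_image_of_injective _ (hinj k), Finset.card_univ]
    simp [Fintype.card_fun]
  have hdisj : ∀ j k : ℕ, j ≠ k → Disjoint (B j) (B k) := by
    intro j k hjk
    rw [Finset.disjoint_left]
    intro a haj hak
    rcases Finset.mem_image.mp haj with ⟨v, _, hv⟩
    rcases Finset.mem_image.mp hak with ⟨w, _, hw⟩
    have : (List.ofFn (fun i => (v i : List ℕ))) = (List.ofFn (fun i => (w i : List ℕ))) := by
      apply hparse
      have := hv.trans hw.symm
      exact congrArg Subtype.val this
    have hlen := congrArg List.length this
    simp only [List.length_ofFn] at hlen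
    omega
  -- lower bound for f on B k
  have hbound : ∀ (k : ℕ) (a : I), a ∈ B k →
      ((2 : ℝ) ^ k * x ^ (k + 1)) ^ (-s) ≤ f a := by
    intro k a ha
    rcases Finset.mem_image.mp ha with ⟨v, _, rfl⟩
    have hcont : (cont (List.ofFn (fun i => (v i : List ℕ))).flatten : ℝ) ≤
        2 ^ k * x ^ (k + 1) := by
      have := cont_join_le x (List.ofFn (fun i => (v i : List ℕ)))
        (by intro hc; have := congrArg List.length hc; simp at this)
        (fun W hW => by
          have hS := hSsub W (hofFn_mem k v W hW)
          exact ⟨hS.1.1, fun d hd => hpos d (hS.1.2.1 d hd), hS.2.2.2.2.2⟩)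
      simpa using this
    have hc1 : (1 : ℝ) ≤ (cont (List.ofFn (fun i => (v i : List ℕ))).flatten : ℝ) := by
      have := one_le_cont (List.ofFn (fun i => (v i : List ℕ))).flatten
        (fun d hd => by
          rcases List.mem_flatten.mp hd with ⟨W, hW, hdW⟩
          exact hpos d ((hSsub W (hofFn_mem k v W hW)).1.2.1 d hdW))
      exact_mod_cast this
    exact rpow_neg_anti (by linarith) hcont hs0
  -- each block contributes at least 1
  have hblock : ∀ k : ℕ, (1 : ℝ) ≤ ∑ a ∈ B k, f a := by
    intro k
    have hcardS : ((sfin.card : ℝ)) = (2 * x) ^ s := by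
      rw [hcard]
      congr 1
      rw [hsfin, Set.ncard_eq_toFinset_card S hSfin]
    have hsum1 : ((B k).card : ℝ) * ((2 : ℝ) ^ k * x ^ (k + 1)) ^ (-s) ≤ ∑ a ∈ B k, f a := by
      have := Finset.card_nsmul_le_sum (B k) f (((2 : ℝ) ^ k * x ^ (k + 1)) ^ (-s)) (hbound k)
      simpa [nsmul_eq_mul] using this
    have hido : ((B k).card : ℝ) * ((2 : ℝ) ^ k * x ^ (k + 1)) ^ (-s) = 2 ^ s := by
      rw [hBcard k]
      push_cast
      rw [hcardS]
      have hb1 : (2 : ℝ) ^ k * x ^ (k + 1) = (2 * x) ^ (k + 1) / 2 := by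
        rw [mul_pow]; ring
      have hb2 : ((2 : ℝ) ^ k * x ^ (k + 1)) ^ (-s) =
          ((2 * x) ^ (k + 1) : ℝ) ^ (-s) / (2 : ℝ) ^ (-s) := by
        rw [hb1, Real.div_rpow (by positivity) (by norm_num)]
      have hb3 : (((2 * x) ^ (k + 1) : ℝ)) ^ (-s) = ((2 * x) ^ (-s) : ℝ) ^ (k + 1) := by
        rw [← Real.rpow_natCast (2 * x) (k + 1), ← Real.rpow_natCast ((2 * x) ^ (-s)) (k + 1),
          ← Real.rpow_mul h2x0.le, ← Real.rpow_mul h2x0.le]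
        ring_nf
      rw [hb2, hb3]
      have hb4 : ((2 * x) ^ s : ℝ) ^ (k + 1) * ((2 * x) ^ (-s) : ℝ) ^ (k + 1) = 1 := by
        rw [← mul_pow]
        have h5 : (2 * x) ^ s * (2 * x) ^ (-s) = 1 := by
          rw [← Real.rpow_add h2x0]; simp
        rw [h5, one_pow]
      calc ((2 * x) ^ s : ℝ) ^ (k + 1) * (((2 * x) ^ (-s) : ℝ) ^ (k + 1) / (2 : ℝ) ^ (-s))
          = (((2 * x) ^ s : ℝ) ^ (k + 1) * ((2 * x) ^ (-s) : ℝ) ^ (k + 1)) / (2 : ℝ) ^ (-s) := by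
            ring
        _ = 1 / (2 : ℝ) ^ (-s) := by rw [hb4]
        _ = 2 ^ s := by rw [Real.rpow_neg (by norm_num : (0:ℝ) ≤ 2), one_div, inv_inv]
    calc (1 : ℝ) ≤ 2 ^ s := Real.one_le_rpow one_le_two hs0
      _ = ((B k).card : ℝ) * ((2 : ℝ) ^ k * x ^ (k + 1)) ^ (-s) := hido.symm
      _ ≤ ∑ a ∈ B k, f a := hsum1
  -- final contradiction
  obtain ⟨m, hm⟩ := exists_nat_gt (∑' a, f a)
  have hTm : ∑ a ∈ (Finset.range m).biUnion B, f a = ∑ k ∈ Finset.range m, ∑ a ∈ B k, f a :=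
    Finset.sum_biUnion (fun j _ k _ hjk => hdisj j k hjk)
  have h1 : (m : ℝ) ≤ ∑ k ∈ Finset.range m, ∑ a ∈ B k, f a := by
    calc (m : ℝ) = ∑ _k ∈ Finset.range m, (1 : ℝ) := by simp
      _ ≤ ∑ k ∈ Finset.range m, ∑ a ∈ B k, f a :=
          Finset.sum_le_sum (fun k _ => hblock k)
  have h2 : ∑ a ∈ (Finset.range m).biUnion B, f a ≤ ∑' a, f a :=
    Summable.sum_le_tsum _ (fun a _ => Real.rpow_nonneg (Nat.cast_nonneg _) _) hsum
  rw [hTm] at h2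
  linarith

theorem dyadic_count_bound (A : Finset ℕ) (hA : A.Nonempty) (hpos : ∀ a ∈ A, 1 ≤ a)
    (δ : ℝ) (hδ : 1 / 2 < δ)
    (hconv : ∀ s : ℝ, 2 * δ < s →
      Summable (fun D : {l : List ℕ // l ≠ [] ∧ (∀ d ∈ l, d ∈ A) ∧ Even l.length} =>
        ((cont D.1 : ℝ)) ^ (-s))) :
    ∀ x : ℝ, 4 * (A.max' hA : ℝ) ^ 2 ≤ x →
      (FA A x : ℝ) - (FA A (x / 2) : ℝ) ≤ 4 * x ^ (2 * δ) := by
  intro x hx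
  classical
  have hAm1 : (1 : ℝ) ≤ (A.max' hA : ℝ) := by exact_mod_cast hpos _ (A.max'_mem hA)
  have hx4 : (4 : ℝ) ≤ x := le_trans (by nlinarith) hx
  have hx0 : (0 : ℝ) < x := by linarith
  have hx1 : (1 : ℝ) ≤ x := by linarith
  set Tx := {D : List ℕ | D ≠ [] ∧ (∀ d ∈ D, d ∈ A) ∧ Even D.length ∧ (cont D : ℝ) ≤ x}
    with hTx
  set Tx2 := {D : List ℕ | D ≠ [] ∧ (∀ d ∈ D, d ∈ A) ∧ Even D.length ∧ (cont D : ℝ) ≤ x / 2}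
    with hTx2
  have hFAx : FA A x = Tx.ncard := rfl
  have hFAx2 : FA A (x / 2) = Tx2.ncard := rfl
  have hfinx : Tx.Finite := T_finite A hpos x
  have hsub : Tx2 ⊆ Tx := fun D hD => ⟨hD.1, hD.2.1, hD.2.2.1, by
    have := hD.2.2.2; linarith⟩
  have hdiff := Set.ncard_diff_add_ncard_of_subset hsub hfinx
  have heq : (Tx.ncard : ℝ) - (Tx2.ncard : ℝ) = ((Tx \ Tx2).ncard : ℝ) := by
    have hc : ((Tx \ Tx2).ncard : ℝ) + (Tx2.ncard : ℝ) = (Tx.ncard : ℝ) := by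
      exact_mod_cast hdiff
    linarith
  rw [hFAx, hFAx2, heq]
  have hxpow0 : (0 : ℝ) ≤ x ^ (2 * δ) := Real.rpow_nonneg hx0.le _
  rcases le_or_gt 1 δ with hδ1 | hδ1
  · -- easy case: δ ≥ 1, use the trivial bound x²
    have h1 : (Tx \ Tx2).ncard ≤ Tx.ncard := Set.ncard_le_ncard Set.diff_subset hfinx
    have h2 := T_card A hpos x
    have hb : ((Tx \ Tx2).ncard : ℝ) ≤ (⌊x⌋₊ : ℝ) * (⌊x⌋₊ : ℝ) := by
      exact_mod_cast le_trans h1 h2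
    have hfl : (⌊x⌋₊ : ℝ) ≤ x := Nat.floor_le hx0.le
    have hfl0 : (0 : ℝ) ≤ (⌊x⌋₊ : ℝ) := Nat.cast_nonneg _
    have hsq : (⌊x⌋₊ : ℝ) * (⌊x⌋₊ : ℝ) ≤ x ^ (2 * δ) := by
      have e1 : (⌊x⌋₊ : ℝ) * (⌊x⌋₊ : ℝ) ≤ x * x := by nlinarith
      have e2 : x * x = x ^ ((2 : ℕ) : ℝ) := by
        rw [Real.rpow_natCast]; ring
      have e3 : x ^ ((2 : ℕ) : ℝ) ≤ x ^ (2 * δ) :=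
        Real.rpow_le_rpow_of_exponent_le hx1 (by push_cast; linarith)
      linarith
    linarith
  · -- main case: 1/2 < δ < 1
    by_contra hcon
    push_neg at hcon
    set S : Set (List ℕ) := Tx \ Tx2 with hS
    have hSfin : S.Finite := hfinx.diff (t := Tx2)
    have hSsub : ∀ W ∈ S, ((W ≠ [] ∧ (∀ d ∈ W, d ∈ A) ∧ Even W.length) ∧ Pw x W) := by
      intro W hW
      have hlt : x / 2 < (cont W : ℝ) :=
        lt_of_not_ge (fun hle => hW.2 ⟨hW.1.1, hW.1.2.1, hW.1.2.2.1, hle⟩)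
      exact ⟨⟨hW.1.1, hW.1.2.1, hW.1.2.2.1⟩, hW.1.1,
        (fun d hd => hpos d (hW.1.2.1 d hd)), hW.1.2.2.1, hlt, hW.1.2.2.2⟩
    have h2x1 : (1 : ℝ) < 2 * x := by linarith
    have h2x0 : (0 : ℝ) < 2 * x := by linarith
    have hlog : 0 < Real.log (2 * x) := Real.log_pos h2x1
    have hN0 : (0 : ℝ) < (S.ncard : ℝ) := lt_of_le_of_lt (by positivity) hcon
    have hNgt : (2 * x) ^ (2 * δ) < (S.ncard : ℝ) := by
      have e1 : ((2 * x) : ℝ) ^ (2 * δ) = (2 : ℝ) ^ (2 * δ) * x ^ (2 * δ) :=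
        Real.mul_rpow (by norm_num) hx0.le
      have e2 : (2 : ℝ) ^ (2 * δ) ≤ 4 := by
        have e3 : (2 : ℝ) ^ (2 * δ) ≤ (2 : ℝ) ^ ((2 : ℕ) : ℝ) :=
          Real.rpow_le_rpow_of_exponent_le one_le_two (by push_cast; linarith)
        rw [Real.rpow_natCast] at e3
        norm_num at e3
        exact e3
      have e4 : ((2 * x) : ℝ) ^ (2 * δ) ≤ 4 * x ^ (2 * δ) := by
        rw [e1]; nlinarith
      linarith
    set s : ℝ := Real.log (S.ncard : ℝ) / Real.log (2 * x) with hs_def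
    have hs : 2 * δ < s := by
      rw [hs_def, lt_div_iff₀ hlog]
      have := Real.log_lt_log (Real.rpow_pos_of_pos h2x0 _) hNgt
      rwa [Real.log_rpow h2x0] at this
    have hs0 : (0 : ℝ) ≤ s := by linarith
    have hcard : ((2 * x) ^ s : ℝ) = (S.ncard : ℝ) := by
      rw [Real.rpow_def_of_pos h2x0, hs_def]
      rw [mul_div_cancel₀ _ (ne_of_gt hlog)]
      exact Real.exp_log hN0
    exact key_estimate A hpos x s hx0 hs0 S hSfin hSsub hcard (hconv s hs)
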